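/- Let S be a finite ordered normal orthogroup satisfying the pseudoinequality x^ω ≤ x^ω y^ω x^ω, let e ∈ E(S), and let H_e^⊤ be the group H_e with an adjoined element ⊤ which is a multiplicative zero and the maximum of the order (elements of H_e being pairwise incomparable). Then the map ψ_e : S → H_e^⊤ defined by ψ_e(s) = ese if e s^ω e = e and ψ_e(s) = ⊤ otherwise, is a homomorphism of ordered semigroups. -/
import Mathlib


/-- `spow a n` is the power `a^(n+1)` in a semigroup. -/
def spow {S : Type*} [Semigroup S] (a : S) : ℕ → S
  | 0 => a
  | n + 1 => spow a n * a

lemma spow_add {S : Type*} [Semigroup S] (a : S) (m n : ℕ) :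
    spow a (m + n + 1) = spow a m * spow a n := by
  induction n with
  | zero => rfl
  | succ k ih =>
    calc spow a (m + (k+1) + 1) = spow a (m + k + 1) * a := rfl
      _ = (spow a m * spow a k) * a := by rw [ih]
      _ = spow a m * (spow a k * a) := mul_assoc _ _ _
      _ = spow a m * spow a (k+1) := rfl

lemma mul_spow {S : Type*} [Semigroup S] (a : S) (n : ℕ) :
    a * spow a n = spow a (n + 1) := by
  induction n with
  | zero => rfl
  | succ k ih =>
    show a * (spow a k * a) = spow a (k+1) * a
    rw [← mul_assoc, ih]

lemma spow_absorb_left {S : Type*} [Semigroup S] {e a : S} (h : e * a = a) (n : ℕ) :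
    e * spow a n = spow a n := by
  induction n with
  | zero => exact h
  | succ k ih =>
    show e * (spow a k * a) = spow a k * a
    rw [← mul_assoc, ih]

lemma spow_absorb_right {S : Type*} [Semigroup S] {e a : S} (h : a * e = a) (n : ℕ) :
    spow a n * e = spow a n := by
  induction n with
  | zero => exact h
  | succ k ih =>
    show (spow a k * a) * e = spow a k * a
    rw [mul_assoc, h]

lemma spow_idem {S : Type*} [Semigroup S] {a : S} (h : a * a = a) (n : ℕ) :
    spow a n = a := by
  induction n with
  | zero => rfl
  | succ k ih =>
    show spow a k * a = a
    rw [ih, h]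

/-- In a finite semigroup with an idempotent-power operation `ω`, there is a single
uniform exponent `M` with `a^(M+1) = ω a` for all `a`. -/
lemma exists_uniform_exponent {S : Type*} [Semigroup S] [Fintype S] (ω : S → S)
    (hpow : ∀ a : S, ∃ n : ℕ, ω a = spow a n)
    (hcr_left : ∀ a : S, ω a * a = a) :
    ∃ M : ℕ, ∀ a : S, spow a M = ω a := by
  classical
  choose n hn using hpow
  have habs : ∀ (a : S) (k : ℕ), ω a * spow a k = spow a k := by
    intro a k
    induction k with
    | zero => exact hcr_left a
    | succ k ih =>
      show ω a * (spow a k * a) = spow a k * a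
      rw [← mul_assoc, ih]
  have hper : ∀ (a : S) (j : ℕ), spow a (j + (n a + 1)) = spow a j := by
    intro a j
    have h1 : j + (n a + 1) = n a + j + 1 := by omega
    rw [h1, spow_add, ← hn a, habs]
  have key : ∀ (a : S) (q : ℕ), 0 < q → spow a ((n a + 1) * q - 1) = ω a := by
    intro a q
    induction q with
    | zero => intro h; exact absurd h (by omega)
    | succ k ih =>
      intro _
      rcases Nat.eq_zero_or_pos k with hk | hk
      · subst hk
        have h1 : (n a + 1) * 1 - 1 = n a := by omega
        rw [h1]
        exact (hn a).symm
      · have h1 : 1 ≤ (n a + 1) * k :=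
          Nat.one_le_iff_ne_zero.mpr (Nat.mul_ne_zero (Nat.succ_ne_zero _)
            (Nat.pos_iff_ne_zero.mp hk))
        have h3 : (n a + 1) * (k+1) = (n a + 1) * k + (n a + 1) := by ring
        have h2 : (n a + 1) * (k+1) - 1 = ((n a + 1) * k - 1) + (n a + 1) := by omega
        rw [h2, hper a, ih hk]
  refine ⟨(∏ a : S, (n a + 1)) - 1, fun a => ?_⟩
  have hdvd : (n a + 1) ∣ ∏ a : S, (n a + 1) :=
    Finset.dvd_prod_of_mem _ (Finset.mem_univ a)
  obtain ⟨q, hq⟩ := hdvd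
  have hqpos : 0 < q := by
    rcases Nat.eq_zero_or_pos q with h0 | h
    · exfalso
      have hp : 0 < ∏ a : S, (n a + 1) :=
        Finset.prod_pos (fun i _ => Nat.succ_pos _)
      rw [hq, h0, Nat.mul_zero] at hp
      exact Nat.lt_irrefl 0 hp
    · exact h
  rw [hq]
  exact key a q hqpos

/-- The key band computation: if `m`, `j` satisfy `em = m`, `me = e`, `ej = e`, `je = j`
and `jm` is idempotent, then `mj = e`. -/
lemma band_core {S : Type*} [Semigroup S] (e m j : S)
    (hjm : (j * m) * (j * m) = j * m)
    (hem : e * m = m) (hme : m * e = e) (hej : e * j = e) (hje : j * e = j) :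
    m * j = e := by
  have hA : e * (j * (m * (j * (m * e)))) = m * j := by
    rw [hme, hje, ← mul_assoc, hej, ← mul_assoc, hem]
  have hB : e * (j * (m * (j * (m * e)))) = e := by
    have h1 : e * (j * (m * (j * (m * e)))) = (e * ((j * m) * (j * m))) * e := by
      simp only [mul_assoc]
    rw [h1, hjm, ← mul_assoc, hej, hem, hme]
  exact hA.symm.trans hB

/-- If `u` has a two-sided inverse `v` relative to the idempotent `e` which is a left
identity for both, then the idempotent power of `u` is `e`. -/
lemma unit_omega {S : Type*} [Semigroup S] (ω : S → S) (M : ℕ)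
    (hM : ∀ a : S, spow a M = ω a) (hidem : ∀ a : S, ω a * ω a = ω a)
    (e u v : S) (huv : u * v = e) (hvu : v * u = e)
    (heu : e * u = u) (hev : e * v = v) :
    ω u = e := by
  have hue : u * e = u := by
    calc u * e = u * (v * u) := by rw [hvu]
      _ = (u * v) * u := (mul_assoc _ _ _).symm
      _ = e * u := by rw [huv]
      _ = u := heu
  have hve : v * e = v := by
    calc v * e = v * (u * v) := by rw [huv]
      _ = (v * u) * v := (mul_assoc _ _ _).symm
      _ = e * v := by rw [hvu]
      _ = v := hev
  have hpw : ∀ n : ℕ, spow u n * spow v n = e := by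
    intro n
    induction n with
    | zero => exact huv
    | succ k ih =>
      calc spow u (k+1) * spow v (k+1)
          = (u * spow u k) * (spow v k * v) := by rw [← mul_spow]; rfl
        _ = u * ((spow u k * spow v k) * v) := by simp only [mul_assoc]
        _ = u * (e * v) := by rw [ih]
        _ = u * v := by rw [hev]
        _ = e := huv
  have h1 : spow u M * e = spow u M := spow_absorb_right hue M
  have h2 : spow u M * e = e := by
    calc spow u M * e = spow u M * (spow u M * spow v M) := by rw [hpw M]
      _ = (spow u M * spow u M) * spow v M := (mul_assoc _ _ _).symm
      _ = (ω u * ω u) * spow v M := by rw [hM u]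
      _ = ω u * spow v M := by rw [hidem u]
      _ = spow u M * spow v M := by rw [hM u]
      _ = e := hpw M
  rw [← hM u]
  exact h1.symm.trans h2

/-- Let S be a finite ordered normal orthogroup satisfying x^ω ≤ x^ω y^ω x^ω and e an
idempotent.  The map ψ_e into H_e^⊤ (sending s to ese if e s^ω e = e and to ⊤ otherwise)
is a homomorphism of ordered semigroups.  Writing `P s` for the condition `e s^ω e = e`
(i.e. ψ_e s ≠ ⊤), this says: ψ_e lands in H_e on such elements, ψ_e(st) = ⊤ iff
ψ_e s = ⊤ or ψ_e t = ⊤, ψ_e is multiplicative on non-⊤ values, and ψ_e is isotone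
(recalling that in H_e^⊤ distinct elements of H_e are incomparable and ⊤ is the maximum,
so s ≤ t forces either ψ_e t = ⊤ or ψ_e s = ψ_e t ∈ H_e). -/
theorem psi_e_ordered_homomorphism
    {S : Type*} [Semigroup S] [Fintype S] [PartialOrder S]
    (hle_left : ∀ a b c : S, a ≤ b → c * a ≤ c * b)
    (hle_right : ∀ a b c : S, a ≤ b → a * c ≤ b * c)
    (ω : S → S)
    (hpow : ∀ a : S, ∃ n : ℕ, ω a = spow a n)
    (hidem : ∀ a : S, ω a * ω a = ω a)
    (hcr_left : ∀ a : S, ω a * a = a)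
    (hcr_right : ∀ a : S, a * ω a = a)
    (horthodox : ∀ e f : S, e * e = e → f * f = f → (e * f) * (e * f) = e * f)
    (hnormal : ∀ e f g : S, e * e = e → f * f = f → g * g = g →
      e * f * e * g * e = e * g * e * f * e)
    (hineq : ∀ s t : S, ω s ≤ ω s * ω t * ω s)
    (e : S) (he : e * e = e) :
    (∀ s : S, e * ω s * e = e → ω (e * s * e) = e) ∧
    (∀ s t : S, e * ω (s * t) * e = e ↔ (e * ω s * e = e ∧ e * ω t * e = e)) ∧
    (∀ s t : S, e * ω s * e = e → e * ω t * e = e →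
      e * (s * t) * e = (e * s * e) * (e * t * e)) ∧
    (∀ s t : S, s ≤ t → e * ω t * e = e →
      (e * ω s * e = e ∧ e * s * e = e * t * e)) := by
  obtain ⟨M, hM⟩ := exists_uniform_exponent ω hpow hcr_left
  have hee : ∀ z : S, e * (e * z) = e * z := fun z => by rw [← mul_assoc, he]
  -- uniform periodicity
  have hper : ∀ (a : S) (j : ℕ), spow a (j + (M + 1)) = spow a j := by
    intro a j
    have h1 : j + (M + 1) = M + j + 1 := by omega
    rw [h1, spow_add, hM a]
    exact spow_absorb_left (hcr_left a) j
  -- inverses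
  have hinvr : ∀ a : S, a * spow a (2*M) = ω a := by
    intro a
    rw [mul_spow]
    have h1 : 2*M + 1 = M + (M + 1) := by omega
    rw [h1, hper, hM]
  have hinvl : ∀ a : S, spow a (2*M) * a = ω a := by
    intro a
    have h0 : spow a (2*M) * a = spow a (2*M + 1) := rfl
    have h1 : 2*M + 1 = M + (M + 1) := by omega
    rw [h0, h1, hper, hM]
  have homega_e : ω e = e := by
    rw [← hM e]
    exact spow_idem he M
  -- absorption of e by the conjugator idempotents
  have habs_l : ∀ x : S, e * ω (e * x) = ω (e * x) := by
    intro x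
    have h : e * (e * x) = e * x := hee x
    rw [← hM (e*x)]
    exact spow_absorb_left h M
  have habs_r : ∀ y : S, ω (y * e) * e = ω (y * e) := by
    intro y
    have h : (y * e) * e = y * e := by rw [mul_assoc, he]
    rw [← hM (y*e)]
    exact spow_absorb_right h M
  -- the two "inverse pulling" lemmas
  have hM0 : ∀ x : S, e * ω x * e = e → ω (e * x) * e = e := by
    intro x hx
    have h1 : (e * x) * (spow x (2*M) * e) = e := by
      calc (e*x) * (spow x (2*M) * e) = (e * (x * spow x (2*M))) * e := by
            simp only [mul_assoc]
        _ = (e * ω x) * e := by rw [hinvr x]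
        _ = e := hx
    calc ω (e*x) * e
        = ω (e*x) * ((e*x) * (spow x (2*M) * e)) := by rw [h1]
      _ = (ω (e*x) * (e*x)) * (spow x (2*M) * e) := (mul_assoc _ _ _).symm
      _ = (e*x) * (spow x (2*M) * e) := by rw [hcr_left]
      _ = e := h1
  have hM0' : ∀ y : S, e * ω y * e = e → e * ω (y * e) = e := by
    intro y hy
    have h1 : (e * spow y (2*M)) * (y * e) = e := by
      calc (e * spow y (2*M)) * (y*e) = (e * (spow y (2*M) * y)) * e := by
            simp only [mul_assoc]
        _ = (e * ω y) * e := by rw [hinvl y]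
        _ = e := hy
    calc e * ω (y*e)
        = ((e * spow y (2*M)) * (y*e)) * ω (y*e) := by rw [h1]
      _ = (e * spow y (2*M)) * ((y*e) * ω (y*e)) := mul_assoc _ _ _
      _ = (e * spow y (2*M)) * (y*e) := by rw [hcr_right]
      _ = e := h1
  -- Goal 1
  have goal1 : ∀ x : S, e * ω x * e = e → ω (e * x * e) = e := by
    intro x hx
    have hxe : (x * e) * e = x * e := by rw [mul_assoc, he]
    have hL : ∀ n : ℕ, spow (e*x*e) n = e * spow (x*e) n := by
      intro n
      induction n with
      | zero => exact mul_assoc e x e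
      | succ k ih =>
        calc spow (e*x*e) (k+1) = spow (e*x*e) k * (e*x*e) := rfl
          _ = (e * spow (x*e) k) * (e*x*e) := by rw [ih]
          _ = e * ((spow (x*e) k * e) * (x*e)) := by simp only [mul_assoc]
          _ = e * (spow (x*e) k * (x*e)) := by rw [spow_absorb_right hxe k]
          _ = e * spow (x*e) (k+1) := rfl
    rw [← hM (e*x*e), hL M, hM (x*e)]
    exact hM0' x hx
  -- Goal 3
  have goal3 : ∀ x y : S, e * ω x * e = e → e * ω y * e = e →
      e * (x * y) * e = (e * x * e) * (e * y * e) := by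
    intro x y hx hy
    have hm : ω (e*x) * ω (e*x) = ω (e*x) := hidem _
    have hj : ω (y*e) * ω (y*e) = ω (y*e) := hidem _
    have hjmidem : (ω (y*e) * ω (e*x)) * (ω (y*e) * ω (e*x)) = ω (y*e) * ω (e*x) :=
      horthodox _ _ hj hm
    have hmj : ω (e*x) * ω (y*e) = e :=
      band_core e (ω (e*x)) (ω (y*e)) hjmidem (habs_l x) (hM0 x hx) (hM0' y hy)
        (habs_r y)
    have hexj : (e*x) * ω (y*e) = (e*x) * e := by
      calc (e*x) * ω (y*e) = ((e*x) * ω (e*x)) * ω (y*e) := by rw [hcr_right]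
        _ = (e*x) * (ω (e*x) * ω (y*e)) := mul_assoc _ _ _
        _ = (e*x) * e := by rw [hmj]
    calc e * (x*y) * e
        = (e*x) * (y*e) := by simp only [mul_assoc]
      _ = (e*x) * (ω (y*e) * (y*e)) := by rw [hcr_left]
      _ = ((e*x) * ω (y*e)) * (y*e) := (mul_assoc _ _ _).symm
      _ = ((e*x) * e) * (y*e) := by rw [hexj]
      _ = (e*x*e) * (e*y*e) := by simp only [mul_assoc, hee]
  -- the group H_e is closed under multiplication
  have hgrp : ∀ a b : S, ω a = e → ω b = e → ω (a * b) = e := by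
    intro a b ha hb
    have hea : e * a = a := by rw [← ha]; exact hcr_left a
    have heb : e * b = b := by rw [← hb]; exact hcr_left b
    have hain : a * spow a (2*M) = e := by rw [hinvr a, ha]
    have hain' : spow a (2*M) * a = e := by rw [hinvl a, ha]
    have hbin : b * spow b (2*M) = e := by rw [hinvr b, hb]
    have hbin' : spow b (2*M) * b = e := by rw [hinvl b, hb]
    have hea2 : e * spow a (2*M) = spow a (2*M) := spow_absorb_left hea _
    have heb2 : e * spow b (2*M) = spow b (2*M) := spow_absorb_left heb _
    apply unit_omega ω M hM hidem e (a*b) (spow b (2*M) * spow a (2*M))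
    · calc (a*b) * (spow b (2*M) * spow a (2*M))
          = a * ((b * spow b (2*M)) * spow a (2*M)) := by simp only [mul_assoc]
        _ = a * (e * spow a (2*M)) := by rw [hbin]
        _ = a * spow a (2*M) := by rw [hea2]
        _ = e := hain
    · calc (spow b (2*M) * spow a (2*M)) * (a*b)
          = spow b (2*M) * ((spow a (2*M) * a) * b) := by simp only [mul_assoc]
        _ = spow b (2*M) * (e * b) := by rw [hain']
        _ = spow b (2*M) * b := by rw [heb]
        _ = e := hbin'
    · calc e * (a*b) = (e*a) * b := (mul_assoc _ _ _).symm
        _ = a * b := by rw [hea]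
    · calc e * (spow b (2*M) * spow a (2*M))
          = (e * spow b (2*M)) * spow a (2*M) := (mul_assoc _ _ _).symm
        _ = spow b (2*M) * spow a (2*M) := by rw [heb2]
  -- order collapse inside H_e
  have hcollapse : ∀ a b : S, ω a = e → ω b = e → a ≤ b → a = b := by
    intro a b ha hb hab
    have hea : e * a = a := by rw [← ha]; exact hcr_left a
    have hae : a * e = a := by rw [← ha]; exact hcr_right a
    have heb : e * b = b := by rw [← hb]; exact hcr_left b
    have hbe : b * e = b := by rw [← hb]; exact hcr_right b
    have hain : a * spow a (2*M) = e := by rw [hinvr a, ha]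
    have hain' : spow a (2*M) * a = e := by rw [hinvl a, ha]
    have hbin : b * spow b (2*M) = e := by rw [hinvr b, hb]
    have hbin' : spow b (2*M) * b = e := by rw [hinvl b, hb]
    have hea2 : e * spow a (2*M) = spow a (2*M) := spow_absorb_left hea _
    have heb2 : e * spow b (2*M) = spow b (2*M) := spow_absorb_left heb _
    have hwz : ω (spow a (2*M) * b) = e := by
      apply unit_omega ω M hM hidem e (spow a (2*M) * b) (spow b (2*M) * a)
      · calc (spow a (2*M) * b) * (spow b (2*M) * a)
            = spow a (2*M) * ((b * spow b (2*M)) * a) := by simp only [mul_assoc]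
          _ = spow a (2*M) * (e * a) := by rw [hbin]
          _ = spow a (2*M) * a := by rw [hea]
          _ = e := hain'
      · calc (spow b (2*M) * a) * (spow a (2*M) * b)
            = spow b (2*M) * ((a * spow a (2*M)) * b) := by simp only [mul_assoc]
          _ = spow b (2*M) * (e * b) := by rw [hain]
          _ = spow b (2*M) * b := by rw [heb]
          _ = e := hbin'
      · calc e * (spow a (2*M) * b) = (e * spow a (2*M)) * b := (mul_assoc _ _ _).symm
          _ = spow a (2*M) * b := by rw [hea2]
      · calc e * (spow b (2*M) * a) = (e * spow b (2*M)) * a := (mul_assoc _ _ _).symm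
          _ = spow b (2*M) * a := by rw [heb2]
    have hez : e ≤ spow a (2*M) * b := by
      have h := hle_left a b (spow a (2*M)) hab
      rwa [hain'] at h
    have hze : (spow a (2*M) * b) * e = spow a (2*M) * b := by
      calc (spow a (2*M) * b) * e = spow a (2*M) * (b * e) := mul_assoc _ _ _
        _ = spow a (2*M) * b := by rw [hbe]
    have hchain : ∀ n : ℕ, spow a (2*M) * b ≤ spow (spow a (2*M) * b) n := by
      intro n
      induction n with
      | zero => exact le_refl _
      | succ k ih =>
        have h1 : spow (spow a (2*M) * b) k ≤
            spow (spow a (2*M) * b) k * (spow a (2*M) * b) := by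
          have h2 := hle_left e (spow a (2*M) * b) (spow (spow a (2*M) * b) k) hez
          rwa [spow_absorb_right hze k] at h2
        exact le_trans ih h1
    have hze2 : spow a (2*M) * b ≤ e := by
      have h := hchain M
      rwa [hM (spow a (2*M) * b), hwz] at h
    have hz_eq : spow a (2*M) * b = e := le_antisymm hze2 hez
    have hfin : a * (spow a (2*M) * b) = b := by
      calc a * (spow a (2*M) * b) = (a * spow a (2*M)) * b := (mul_assoc _ _ _).symm
        _ = e * b := by rw [hain]
        _ = b := heb
    calc a = a * e := hae.symm
      _ = a * (spow a (2*M) * b) := by rw [hz_eq]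
      _ = b := hfin
  -- Goal 2, hard direction
  have goal2r : ∀ x y : S, e * ω x * e = e → e * ω y * e = e →
      e * ω (x * y) * e = e := by
    intro x y hx hy
    have hDins : e * (x*y) * e = (e*x*e) * (e*y*e) := goal3 x y hx hy
    have hwD : ω ((e*x*e) * (e*y*e)) = e := hgrp _ _ (goal1 x hx) (goal1 y hy)
    have hwabs : ∀ k : ℕ, spow (x*y) k * ω (x*y) = spow (x*y) k := by
      intro k
      rw [← hM (x*y), ← spow_add, show k + M + 1 = k + (M+1) from by omega]
      exact hper (x*y) k
    have hkey : ∀ k : ℕ, e * spow (x*y) k * e ≤ spow ((e*x*e) * (e*y*e)) k := by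
      intro k
      induction k with
      | zero => exact le_of_eq hDins
      | succ k ih =>
        have hw : ω (x*y) ≤ ω (x*y) * e * ω (x*y) := by
          have h := hineq (x*y) e
          rwa [homega_e] at h
        have heq : ((e * spow (x*y) k) * ω (x*y)) * ((x*y) * e)
            = e * spow (x*y) (k+1) * e := by
          calc ((e * spow (x*y) k) * ω (x*y)) * ((x*y) * e)
              = (e * spow (x*y) k) * ((ω (x*y) * (x*y)) * e) := by
                simp only [mul_assoc]
            _ = (e * spow (x*y) k) * ((x*y) * e) := by rw [hcr_left]
            _ = e * spow (x*y) (k+1) * e := by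
                show _ = e * (spow (x*y) k * (x*y)) * e
                simp only [mul_assoc]
        have h2 : ω (x*y) * ((x*y) * e) = (x*y) * e := by
          rw [← mul_assoc, hcr_left]
        calc e * spow (x*y) (k+1) * e
            = ((e * spow (x*y) k) * ω (x*y)) * ((x*y) * e) := heq.symm
          _ ≤ ((e * spow (x*y) k) * (ω (x*y) * e * ω (x*y))) * ((x*y) * e) :=
              hle_right _ _ _ (hle_left _ _ _ hw)
          _ = (e * (spow (x*y) k * ω (x*y))) * (e * (ω (x*y) * ((x*y) * e))) := by
              simp only [mul_assoc]
          _ = (e * spow (x*y) k) * (e * ((x*y) * e)) := by rw [hwabs k, h2]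
          _ = ((e * spow (x*y) k) * e) * ((e*x*e) * (e*y*e)) := by
              rw [← hDins]
              simp only [mul_assoc, hee]
          _ ≤ spow ((e*x*e) * (e*y*e)) k * ((e*x*e) * (e*y*e)) :=
              hle_right _ _ _ ih
          _ = spow ((e*x*e) * (e*y*e)) (k+1) := rfl
    have h1 : e * ω (x*y) * e ≤ e := by
      have h := hkey M
      rwa [hM (x*y), hM ((e*x*e) * (e*y*e)), hwD] at h
    have h2 : e ≤ e * ω (x*y) * e := by
      have h := hineq e (x*y)
      rwa [homega_e] at h
    exact le_antisymm h1 h2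
  -- Goal 2, easy direction
  have goal2l : ∀ s t : S, e * ω (s * t) * e = e →
      e * ω s * e = e ∧ e * ω t * e = e := by
    intro s t h
    have habs1 : ω s * ω (s*t) = ω (s*t) := by
      have hh : ω s * (s*t) = s*t := by rw [← mul_assoc, hcr_left]
      rw [← hM (s*t)]
      exact spow_absorb_left hh M
    have habs2 : ω (s*t) * ω t = ω (s*t) := by
      have hh : (s*t) * ω t = s*t := by rw [mul_assoc, hcr_right]
      rw [← hM (s*t)]
      exact spow_absorb_right hh M
    constructor
    · calc e * ω s * e
          = (e * ω s) * ((e * ω (s*t)) * e) := by rw [h]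
        _ = (e * ω s) * ((e * (ω s * ω (s*t))) * e) := by rw [habs1]
        _ = ((e * ω s) * (e * ω s)) * (ω (s*t) * e) := by simp only [mul_assoc]
        _ = (e * ω s) * (ω (s*t) * e) := by rw [horthodox e (ω s) he (hidem s)]
        _ = (e * (ω s * ω (s*t))) * e := by simp only [mul_assoc]
        _ = (e * ω (s*t)) * e := by rw [habs1]
        _ = e := h
    · calc e * ω t * e
          = e * (ω t * e) := mul_assoc _ _ _
        _ = ((e * ω (s*t)) * e) * (ω t * e) := by rw [h]
        _ = ((e * (ω (s*t) * ω t)) * e) * (ω t * e) := by rw [habs2]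
        _ = (e * ω (s*t)) * ((ω t * e) * (ω t * e)) := by simp only [mul_assoc]
        _ = (e * ω (s*t)) * (ω t * e) := by rw [horthodox (ω t) e (hidem t) he]
        _ = (e * (ω (s*t) * ω t)) * e := by simp only [mul_assoc]
        _ = (e * ω (s*t)) * e := by rw [habs2]
        _ = e := h
  -- Goal 4
  have goal4 : ∀ s t : S, s ≤ t → e * ω t * e = e →
      e * ω s * e = e ∧ e * s * e = e * t * e := by
    intro s t hst ht
    have hmono : ∀ n : ℕ, spow s n ≤ spow t n := by
      intro n
      induction n with
      | zero => exact hst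
      | succ k ih =>
        calc spow s (k+1) = spow s k * s := rfl
          _ ≤ spow t k * s := hle_right _ _ s ih
          _ ≤ spow t k * t := hle_left _ _ (spow t k) hst
          _ = spow t (k+1) := rfl
    have hPs : e * ω s * e = e := by
      apply le_antisymm
      · have h1 : ω s ≤ ω t := by
          rw [← hM s, ← hM t]
          exact hmono M
        calc e * ω s * e ≤ e * ω t * e := hle_right _ _ e (hle_left _ _ e h1)
          _ = e := ht
      · have h := hineq e s
        rwa [homega_e] at h
    exact ⟨hPs, hcollapse _ _ (goal1 s hPs) (goal1 t ht)
      (hle_right _ _ e (hle_left s t e hst))⟩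
  exact ⟨goal1, fun s t => ⟨goal2l s t, fun h => goal2r s t h.1 h.2⟩, goal3, goal4⟩
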